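/- arXiv:1704.05489 — 7 statements merged into one kernel-verified Lean document; each statement's English description precedes it below -/
import Mathlib

section
/- Let ℓ be a prime, and let T be the d²×d integer matrix formed by stacking d copies of the d×d identity matrix vertically. Then T is ℓ-Pirutka: for all nonempty subsets I ⊆ {1,…,d²} and J ⊆ {1,…,d} with |I| − |J| = d² − d, the submatrix T_{I,J} has rank |J| modulo ℓ. -/
/-- An `n × d` integer matrix `T` is `ℓ`-Pirutka if for all nonempty subsets
`I ⊆ Fin n` and `J ⊆ Fin d` with `|I| - |J| = n - d`, the submatrix `T_{I,J}`
has maximal rank `|J|` modulo `ℓ`. -/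
def IsPirutka (ℓ n d : ℕ) (T : Matrix (Fin n) (Fin d) ℤ) : Prop :=
  ∀ (I : Finset (Fin n)) (J : Finset (Fin d)), I.Nonempty → J.Nonempty →
    I.card + d = J.card + n →
    ((T.map (Int.cast : ℤ → ZMod ℓ)).submatrix
        (fun i : {x // x ∈ I} => (i : Fin n))
        (fun j : {x // x ∈ J} => (j : Fin d))).rank = J.card

/-- The `d² × d` matrix formed by stacking `d` copies of the identity matrix
is `ℓ`-Pirutka for every prime `ℓ`. -/
theorem stacked_identity_isPirutka (ℓ d : ℕ) (hℓ : ℓ.Prime) :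
    IsPirutka ℓ (d * d) d
      (Matrix.of fun (i : Fin (d * d)) (j : Fin d) =>
        if (i : ℕ) % d = (j : ℕ) then (1 : ℤ) else 0) := by
  haveI : Fact ℓ.Prime := ⟨hℓ⟩
  intro I J hI hJ hcard
  set K := ZMod ℓ
  obtain ⟨j₀, hj₀⟩ := hJ
  have hd : 0 < d := j₀.pos
  -- every column index in J is hit by a row in I
  have hhit : ∀ j ∈ J, ∃ i ∈ I, (i : ℕ) % d = (j : ℕ) := by
    intro j hj
    by_contra hcon
    push_neg at hcon
    -- all d rows congruent to j lie outside I
    have hinj : ∀ k : Fin d, (⟨(k : ℕ) * d + (j : ℕ), by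
        calc (k : ℕ) * d + (j : ℕ) < (k : ℕ) * d + d := by
              exact Nat.add_lt_add_left j.is_lt _
          _ = ((k : ℕ) + 1) * d := by ring
          _ ≤ d * d := Nat.mul_le_mul_right d k.is_lt⟩ : Fin (d * d)) ∈ Iᶜ := by
      intro k
      simp only [Finset.mem_compl]
      intro hmem
      exact hcon _ hmem (by simp [Nat.mul_add_mod', Nat.mod_eq_of_lt j.is_lt])
    have hle : d ≤ Iᶜ.card := by
      have := Finset.card_le_card_of_injOn
        (s := (Finset.univ : Finset (Fin d))) (t := Iᶜ)
        (fun k : Fin d => (⟨(k : ℕ) * d + (j : ℕ), by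
          calc (k : ℕ) * d + (j : ℕ) < (k : ℕ) * d + d := Nat.add_lt_add_left j.is_lt _
            _ = ((k : ℕ) + 1) * d := by ring
            _ ≤ d * d := Nat.mul_le_mul_right d k.is_lt⟩ : Fin (d * d)))
        (fun k _ => hinj k)
        (by
          intro a _ b _ hab
          have h1 : (a : ℕ) * d + (j : ℕ) = (b : ℕ) * d + (j : ℕ) := congrArg Fin.val hab
          have h2 : (a : ℕ) * d = (b : ℕ) * d := by omega
          exact Fin.ext (Nat.eq_of_mul_eq_mul_right hd h2))
      simpa using this
    have hIc : Iᶜ.card = d * d - I.card := by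
      rw [Finset.card_compl, Fintype.card_fin]
    have hJ1 : 1 ≤ J.card := Finset.card_pos.mpr ⟨j₀, hj₀⟩
    have hJd : J.card ≤ d := by
      simpa using Finset.card_le_card (Finset.subset_univ J)
    have hIle : I.card ≤ d * d := by
      simpa using Finset.card_le_card (Finset.subset_univ I)
    omega
  -- choose a row for each column
  choose f hfI hfmod using hhit
  set M := ((Matrix.of fun (i : Fin (d * d)) (j : Fin d) =>
        if (i : ℕ) % d = (j : ℕ) then (1 : ℤ) else 0).map
        (Int.cast : ℤ → K)).submatrix
        (fun i : {x // x ∈ I} => (i : Fin (d * d)))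
        (fun j : {x // x ∈ J} => (j : Fin d)) with hM
  have hMapply : ∀ (i : {x // x ∈ I}) (j : {x // x ∈ J}),
      M i j = if ((i : Fin (d * d)) : ℕ) % d = ((j : Fin d) : ℕ) then (1 : K) else 0 := by
    intro i j
    simp [hM, Matrix.submatrix_apply, Matrix.map_apply, apply_ite (Int.cast : ℤ → K)]
  -- selection matrix
  let F : {x // x ∈ J} → {x // x ∈ I} := fun j => ⟨f j j.2, hfI j j.2⟩
  let P : Matrix {x // x ∈ J} {x // x ∈ I} K :=
    Matrix.of fun j i => if F j = i then 1 else 0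
  have hPM : P * M = 1 := by
    ext j j'
    simp only [Matrix.mul_apply, P, Matrix.of_apply, ite_mul, one_mul, zero_mul]
    rw [Finset.sum_ite_eq Finset.univ (F j)]
    simp only [Finset.mem_univ, if_true]
    rw [hMapply]
    have : ((F j : {x // x ∈ I}) : Fin (d * d)).val % d = ((j : Fin d) : ℕ) :=
      hfmod j j.2
    rw [this]
    by_cases h : j = j'
    · subst h; simp
    · have hne : ((j : Fin d) : ℕ) ≠ ((j' : Fin d) : ℕ) := by
        intro he
        exact h (Subtype.ext (Fin.ext he))
      simp [Matrix.one_apply, h, hne]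
  have hub : M.rank ≤ J.card := by
    have := M.rank_le_card_width
    simpa [Fintype.card_coe] using this
  have hlb : J.card ≤ M.rank := by
    have h1 : (P * M).rank = J.card := by
      rw [hPM, Matrix.rank_one, Fintype.card_coe]
    have := Matrix.rank_mul_le_right P M
    omega
  omega
end

section
/- The 3×3 integer matrix with rows (1,3,3), (1,2,1), (1,1,2) is ℓ-Pirutka for every prime ℓ > 3. -/
/-- Rank is invariant under reindexing by equivalences, rectangular version. -/
lemma rank_submatrix_equiv {R : Type*} [CommRing R] {m n k l : Type*}
    [Fintype m] [Fintype n] [Fintype k] [Fintype l]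
    (A : Matrix m n R) (e₁ : k ≃ m) (e₂ : l ≃ n) :
    (A.submatrix e₁ e₂).rank = A.rank := by
  rw [Matrix.rank, Matrix.rank, Matrix.mulVecLin_submatrix, LinearMap.range_comp,
    LinearMap.range_comp]
  have h2 : LinearMap.range (LinearMap.funLeft R R (e₂.symm : n → l)) = ⊤ :=
    LinearMap.range_eq_top.mpr
      (LinearMap.funLeft_surjective_of_injective _ _ _ e₂.symm.injective)
  rw [h2, Submodule.map_top]
  exact LinearEquiv.finrank_map_eq (LinearEquiv.funCongrLeft R R e₁) _

lemma rank_aux {K : Type*} [Field K] {n d k : ℕ} (M : Matrix (Fin n) (Fin d) K)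
    (I : Finset (Fin n)) (J : Finset (Fin d)) (r : Fin k → Fin n) (c : Fin k → Fin d)
    (hr : ∀ i, r i ∈ I) (hc : ∀ j, c j ∈ J)
    (hrinj : Function.Injective r) (hcinj : Function.Injective c)
    (hI : I.card = k) (hJ : J.card = k)
    (h : (M.submatrix r c).det ≠ 0) :
    (M.submatrix (fun i : {x // x ∈ I} => (i : Fin n))
      (fun j : {x // x ∈ J} => (j : Fin d))).rank = k := by
  have hbr : Function.Bijective (fun i : Fin k => (⟨r i, hr i⟩ : {x // x ∈ I})) := by
    rw [Fintype.bijective_iff_injective_and_card]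
    exact ⟨fun a b hab => hrinj (congrArg Subtype.val hab),
      by simp [Fintype.card_coe, hI]⟩
  have hbc : Function.Bijective (fun j : Fin k => (⟨c j, hc j⟩ : {x // x ∈ J})) := by
    rw [Fintype.bijective_iff_injective_and_card]
    exact ⟨fun a b hab => hcinj (congrArg Subtype.val hab),
      by simp [Fintype.card_coe, hJ]⟩
  set eI := Equiv.ofBijective _ hbr with heI
  set eJ := Equiv.ofBijective _ hbc with heJ
  have key : (M.submatrix (fun i : {x // x ∈ I} => (i : Fin n))
      (fun j : {x // x ∈ J} => (j : Fin d))).submatrix eI eJ = M.submatrix r c := rfl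
  rw [← rank_submatrix_equiv _ eI eJ, key, Matrix.rank_of_isUnit, Fintype.card_fin]
  exact (Matrix.isUnit_iff_isUnit_det _).mpr (isUnit_iff_ne_zero.mpr h)

lemma pirutka_case {ℓ : ℕ} [Fact ℓ.Prime] (h3 : 3 < ℓ) {n d k : ℕ}
    (T : Matrix (Fin n) (Fin d) ℤ)
    (I : Finset (Fin n)) (J : Finset (Fin d)) (r : Fin k → Fin n) (c : Fin k → Fin d)
    (h : (∀ i, r i ∈ I) ∧ (∀ j, c j ∈ J) ∧ Function.Injective r ∧ Function.Injective c ∧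
      I.card = k ∧ J.card = k ∧ 0 < (T.submatrix r c).det.natAbs ∧
      (T.submatrix r c).det.natAbs ≤ 3) :
    ((T.map (Int.cast : ℤ → ZMod ℓ)).submatrix
        (fun i : {x // x ∈ I} => (i : Fin n))
        (fun j : {x // x ∈ J} => (j : Fin d))).rank = J.card := by
  obtain ⟨h1, h2, h3r, h4, h5, h6, h7, h8⟩ := h
  haveI : NeZero ℓ := ⟨(Fact.out : ℓ.Prime).ne_zero⟩
  rw [h6]
  apply rank_aux _ _ _ r c h1 h2 h3r h4 h5 h6
  rw [Matrix.submatrix_map,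
    show (T.submatrix r c).map (Int.cast : ℤ → ZMod ℓ)
      = (Int.castRingHom (ZMod ℓ)).mapMatrix (T.submatrix r c) from rfl,
    ← RingHom.map_det]
  intro hz
  rw [show ((Int.castRingHom (ZMod ℓ)) (T.submatrix r c).det)
      = (((T.submatrix r c).det : ℤ) : ZMod ℓ) from rfl,
    ZMod.intCast_zmod_eq_zero_iff_dvd] at hz
  have h9 : ℓ ∣ (T.submatrix r c).det.natAbs := by
    have := Int.natAbs_dvd_natAbs.mpr hz
    simpa using this
  have := Nat.le_of_dvd h7 h9
  omega

/-- The 3×3 matrix with rows (1,3,3), (1,2,1), (1,1,2) is ℓ-Pirutka for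
every prime ℓ > 3. -/
theorem matrix_3x3_isPirutka (ℓ : ℕ) (hℓ : ℓ.Prime) (h3 : 3 < ℓ) :
    IsPirutka ℓ 3 3 !![1, 3, 3; 1, 2, 1; 1, 1, 2] := by
  haveI : Fact ℓ.Prime := ⟨hℓ⟩
  intro I J hIne hJne hcard
  have hc : I.card = J.card := by omega
  fin_cases I <;> fin_cases J <;>
    first
      | exact absurd hIne (by decide)
      | exact absurd hJne (by decide)
      | exact absurd hc (by decide)
      | exact pirutka_case h3 _ _ _ ![0] ![0] (by decide)
      | exact pirutka_case h3 _ _ _ ![0] ![1] (by decide)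
      | exact pirutka_case h3 _ _ _ ![0] ![2] (by decide)
      | exact pirutka_case h3 _ _ _ ![1] ![0] (by decide)
      | exact pirutka_case h3 _ _ _ ![1] ![1] (by decide)
      | exact pirutka_case h3 _ _ _ ![1] ![2] (by decide)
      | exact pirutka_case h3 _ _ _ ![2] ![0] (by decide)
      | exact pirutka_case h3 _ _ _ ![2] ![1] (by decide)
      | exact pirutka_case h3 _ _ _ ![2] ![2] (by decide)
      | exact pirutka_case h3 _ _ _ ![0,1] ![0,1] (by decide)
      | exact pirutka_case h3 _ _ _ ![0,1] ![0,2] (by decide)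
      | exact pirutka_case h3 _ _ _ ![0,1] ![1,2] (by decide)
      | exact pirutka_case h3 _ _ _ ![0,2] ![0,1] (by decide)
      | exact pirutka_case h3 _ _ _ ![0,2] ![0,2] (by decide)
      | exact pirutka_case h3 _ _ _ ![0,2] ![1,2] (by decide)
      | exact pirutka_case h3 _ _ _ ![1,2] ![0,1] (by decide)
      | exact pirutka_case h3 _ _ _ ![1,2] ![0,2] (by decide)
      | exact pirutka_case h3 _ _ _ ![1,2] ![1,2] (by decide)
      | exact pirutka_case h3 _ _ _ ![0,1,2] ![0,1,2] (by decide)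
end

section
/- The 4×3 integer matrix with rows (1,1,1), (1,1,0), (0,1,1), (1,2,1) is ℓ-Pirutka for every prime ℓ. -/
/-- Selecting a submatrix (arbitrary row/column maps) cannot increase rank. -/
lemma rank_submatrix_le' {K : Type*} [Field K] {m n p q : Type*}
    [Fintype m] [Fintype n] [Fintype p] [Fintype q] [DecidableEq m] [DecidableEq n]
    (A : Matrix m n K) (r : p → m) (c : q → n) :
    (A.submatrix r c).rank ≤ A.rank := by
  have h1 : ((1 : Matrix m m K).submatrix r (Equiv.refl m)) * A
      = A.submatrix r id := by
    rw [Matrix.one_submatrix_mul]; rfl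
  have h2 : (A.submatrix r id) * ((1 : Matrix n n K).submatrix (Equiv.refl n) c)
      = A.submatrix r c := by
    rw [Matrix.mul_submatrix_one]; rfl
  calc (A.submatrix r c).rank
      = ((A.submatrix r id) * ((1 : Matrix n n K).submatrix (Equiv.refl n) c)).rank := by
        rw [h2]
    _ ≤ (A.submatrix r id).rank := Matrix.rank_mul_le_left _ _
    _ = (((1 : Matrix m m K).submatrix r (Equiv.refl m)) * A).rank := by rw [h1]
    _ ≤ A.rank := Matrix.rank_mul_le_right _ _

/-- Key lemma: if a `k × k` minor with rows in `I` and columns in `J` is `±1`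
over `ℤ` and `J` has cardinality `k`, then the `(I, J)` submatrix modulo `ℓ`
has rank `J.card`. -/
lemma pirutka_key {ℓ : ℕ} (hℓ : ℓ.Prime) {n d k : ℕ} (T : Matrix (Fin n) (Fin d) ℤ)
    (I : Finset (Fin n)) (J : Finset (Fin d))
    (r : Fin k → Fin n) (c : Fin k → Fin d)
    (hJk : J.card = k)
    (hr : ∀ i, r i ∈ I) (hc : ∀ j, c j ∈ J)
    (hd : (T.submatrix r c).det = 1 ∨ (T.submatrix r c).det = -1) :
    ((T.map (Int.cast : ℤ → ZMod ℓ)).submatrix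
        (fun i : {x // x ∈ I} => (i : Fin n))
        (fun j : {x // x ∈ J} => (j : Fin d))).rank = J.card := by
  haveI : Fact ℓ.Prime := ⟨hℓ⟩
  set A := ((T.map (Int.cast : ℤ → ZMod ℓ)).submatrix
      (fun i : {x // x ∈ I} => (i : Fin n))
      (fun j : {x // x ∈ J} => (j : Fin d))) with hA
  have hsub : A.submatrix (fun i => (⟨r i, hr i⟩ : {x // x ∈ I}))
      (fun j => (⟨c j, hc j⟩ : {x // x ∈ J}))
      = (T.submatrix r c).map (Int.cast : ℤ → ZMod ℓ) := rfl
  have hdet : IsUnit ((T.submatrix r c).map (Int.cast : ℤ → ZMod ℓ)).det := by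
    have : ((T.submatrix r c).map (Int.cast : ℤ → ZMod ℓ)).det
        = (((T.submatrix r c).det : ℤ) : ZMod ℓ) := by
      rw [show (T.submatrix r c).map (Int.cast : ℤ → ZMod ℓ)
          = (Int.castRingHom (ZMod ℓ)).mapMatrix (T.submatrix r c) from rfl,
        ← RingHom.map_det]
      rfl
    rw [this]
    rcases hd with h | h <;> rw [h]
    · simp
    · push_cast
      exact isUnit_one.neg
  have hlow : k ≤ A.rank := by
    have h1 : ((T.submatrix r c).map (Int.cast : ℤ → ZMod ℓ)).rank = k := by
      rw [Matrix.rank_of_isUnit _ ((Matrix.isUnit_iff_isUnit_det _).mpr hdet)]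
      simp
    calc k = ((T.submatrix r c).map (Int.cast : ℤ → ZMod ℓ)).rank := h1.symm
      _ = (A.submatrix (fun i => (⟨r i, hr i⟩ : {x // x ∈ I}))
            (fun j => (⟨c j, hc j⟩ : {x // x ∈ J}))).rank := by rw [hsub]
      _ ≤ A.rank := rank_submatrix_le' _ _ _
  have hup : A.rank ≤ J.card := by
    have := A.rank_le_card_width
    rwa [Fintype.card_coe] at this
  omega

set_option maxHeartbeats 4000000 in
/-- The 4×3 matrix with rows (1,1,1), (1,1,0), (0,1,1), (1,2,1) is ℓ-Pirutka
for every prime ℓ. -/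
theorem matrix_4x3_isPirutka (ℓ : ℕ) (hℓ : ℓ.Prime) :
    IsPirutka ℓ 4 3 !![1, 1, 1; 1, 1, 0; 0, 1, 1; 1, 2, 1] := by
  intro I J hI hJ hcard
  fin_cases I <;> fin_cases J <;>
  first
    | exact absurd hcard (by decide)
    | exact absurd hJ (by decide)
    | exact pirutka_key hℓ _ _ _ ![0] ![0] (by decide) (by decide) (by decide) (by decide)
    | exact pirutka_key hℓ _ _ _ ![1] ![0] (by decide) (by decide) (by decide) (by decide)
    | exact pirutka_key hℓ _ _ _ ![3] ![0] (by decide) (by decide) (by decide) (by decide)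
    | exact pirutka_key hℓ _ _ _ ![0] ![1] (by decide) (by decide) (by decide) (by decide)
    | exact pirutka_key hℓ _ _ _ ![1] ![1] (by decide) (by decide) (by decide) (by decide)
    | exact pirutka_key hℓ _ _ _ ![2] ![1] (by decide) (by decide) (by decide) (by decide)
    | exact pirutka_key hℓ _ _ _ ![0] ![2] (by decide) (by decide) (by decide) (by decide)
    | exact pirutka_key hℓ _ _ _ ![2] ![2] (by decide) (by decide) (by decide) (by decide)
    | exact pirutka_key hℓ _ _ _ ![3] ![2] (by decide) (by decide) (by decide) (by decide)
    | exact pirutka_key hℓ _ _ _ ![0, 2] ![0, 1] (by decide) (by decide) (by decide) (by decide)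
    | exact pirutka_key hℓ _ _ _ ![0, 3] ![0, 1] (by decide) (by decide) (by decide) (by decide)
    | exact pirutka_key hℓ _ _ _ ![1, 2] ![0, 1] (by decide) (by decide) (by decide) (by decide)
    | exact pirutka_key hℓ _ _ _ ![1, 3] ![0, 1] (by decide) (by decide) (by decide) (by decide)
    | exact pirutka_key hℓ _ _ _ ![2, 3] ![0, 1] (by decide) (by decide) (by decide) (by decide)
    | exact pirutka_key hℓ _ _ _ ![0, 1] ![0, 2] (by decide) (by decide) (by decide) (by decide)
    | exact pirutka_key hℓ _ _ _ ![0, 2] ![0, 2] (by decide) (by decide) (by decide) (by decide)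
    | exact pirutka_key hℓ _ _ _ ![1, 2] ![0, 2] (by decide) (by decide) (by decide) (by decide)
    | exact pirutka_key hℓ _ _ _ ![1, 3] ![0, 2] (by decide) (by decide) (by decide) (by decide)
    | exact pirutka_key hℓ _ _ _ ![2, 3] ![0, 2] (by decide) (by decide) (by decide) (by decide)
    | exact pirutka_key hℓ _ _ _ ![0, 1] ![1, 2] (by decide) (by decide) (by decide) (by decide)
    | exact pirutka_key hℓ _ _ _ ![0, 3] ![1, 2] (by decide) (by decide) (by decide) (by decide)
    | exact pirutka_key hℓ _ _ _ ![1, 2] ![1, 2] (by decide) (by decide) (by decide) (by decide)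
    | exact pirutka_key hℓ _ _ _ ![1, 3] ![1, 2] (by decide) (by decide) (by decide) (by decide)
    | exact pirutka_key hℓ _ _ _ ![2, 3] ![1, 2] (by decide) (by decide) (by decide) (by decide)
    | exact pirutka_key hℓ _ _ _ ![0, 1, 2] ![0, 1, 2] (by decide) (by decide) (by decide) (by decide)
end

section
/- There is no 3-Pirutka 3×3 matrix; that is, for every 3×3 integer matrix T there exist nonempty subsets I, J ⊆ {1,2,3} with |I| = |J| such that the submatrix T_{I,J} does not have rank |J| modulo 3. -/

lemma rank_lt_of_mulVec_eq_zero {m n : Type*} [Fintype m] [Fintype n]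
    {K : Type*} [Field K] (M : Matrix m n K) {v : n → K}
    (hv : v ≠ 0) (h : M.mulVec v = 0) : M.rank < Fintype.card n := by
  have h1 := LinearMap.finrank_range_add_finrank_ker M.mulVecLin
  have h2 : 0 < Module.finrank K (LinearMap.ker M.mulVecLin) := by
    rw [Module.finrank_pos_iff_exists_ne_zero]
    exact ⟨⟨v, h⟩, fun hc => hv (by simpa using congrArg Subtype.val hc)⟩
  have h3 : Module.finrank K (n → K) = Fintype.card n := Module.finrank_pi K
  rw [Matrix.rank]
  omega

lemma submatrix_rank_lt (M : Matrix (Fin 3) (Fin 3) (ZMod 3))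
    (I J : Finset (Fin 3)) (w : Fin 3 → ZMod 3)
    (hw0 : ∀ j ∉ J, w j = 0) (j0 : Fin 3) (hj0 : j0 ∈ J) (hwj : w j0 ≠ 0)
    (hker : ∀ i ∈ I, M.mulVec w i = 0) :
    (M.submatrix (fun i : {x // x ∈ I} => (i : Fin 3))
      (fun j : {x // x ∈ J} => (j : Fin 3))).rank < J.card := by
  have hv : (fun j : {x // x ∈ J} => w j) ≠ 0 := by
    intro hc
    exact hwj (congrFun hc ⟨j0, hj0⟩)
  have hmv : (M.submatrix (fun i : {x // x ∈ I} => (i : Fin 3))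
      (fun j : {x // x ∈ J} => (j : Fin 3))).mulVec (fun j => w j) = 0 := by
    funext i
    have : ∑ j : {x // x ∈ J}, M (i : Fin 3) (j : Fin 3) * w j
        = ∑ j ∈ J, M (i : Fin 3) j * w j := by
      rw [← Finset.sum_attach J (fun j => M (i : Fin 3) j * w j), Finset.univ_eq_attach]
    simp only [Matrix.mulVec, dotProduct, Matrix.submatrix_apply, Pi.zero_apply]
    rw [this, Finset.sum_subset (Finset.subset_univ J)
      (fun j _ hj => by rw [hw0 j hj, mul_zero])]
    exact hker i i.2
  have := rank_lt_of_mulVec_eq_zero _ hv hmv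
  simpa [Fintype.card_coe] using this

lemma twobytwo : ∀ a b c d e f : ZMod 3, a ≠ 0 → b ≠ 0 → c ≠ 0 →
    d ≠ 0 → e ≠ 0 → f ≠ 0 →
    (a * e - b * d = 0 ∨ a * f - c * d = 0 ∨ b * f - c * e = 0) := by
  decide

/-- There is no 3-Pirutka 3×3 matrix: every 3×3 integer matrix has nonempty
subsets `I`, `J` with `|I| = |J|` such that `T_{I,J}` does not have rank `|J|`
modulo 3. -/
theorem no_3Pirutka_3x3 (T : Matrix (Fin 3) (Fin 3) ℤ) :
    ∃ (I J : Finset (Fin 3)), I.Nonempty ∧ J.Nonempty ∧ I.card = J.card ∧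
      ((T.map (Int.cast : ℤ → ZMod 3)).submatrix
          (fun i : {x // x ∈ I} => (i : Fin 3))
          (fun j : {x // x ∈ J} => (j : Fin 3))).rank ≠ J.card := by
  set M : Matrix (Fin 3) (Fin 3) (ZMod 3) := T.map (Int.cast : ℤ → ZMod 3) with hM
  by_cases hz : ∃ i j, M i j = 0
  · obtain ⟨i, j, hij⟩ := hz
    refine ⟨{i}, {j}, Finset.singleton_nonempty i, Finset.singleton_nonempty j, rfl, ?_⟩
    have h := submatrix_rank_lt M {i} {j} (Pi.single j 1)
      (fun k hk => Pi.single_eq_of_ne (by simpa using hk) 1) j (Finset.mem_singleton_self j)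
      (by simp) ?_
    · exact Nat.ne_of_lt h
    · intro i' hi'
      rw [Finset.mem_singleton] at hi'
      subst hi'
      simp [Matrix.mulVec_single, hij]
  · push_neg at hz
    have key := twobytwo (M 0 0) (M 0 1) (M 0 2) (M 1 0) (M 1 1) (M 1 2)
      (hz 0 0) (hz 0 1) (hz 0 2) (hz 1 0) (hz 1 1) (hz 1 2)
    rcases key with h | h | h
    · refine ⟨{0, 1}, {0, 1}, ⟨0, by decide⟩, ⟨0, by decide⟩, rfl, ?_⟩
      refine Nat.ne_of_lt (submatrix_rank_lt M {0, 1} {0, 1} ![M 1 1, -(M 1 0), 0]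
        (by intro k hk; fin_cases k <;> simp_all) 0 (by decide) (by simpa using hz 1 1) ?_)
      intro i hi
      fin_cases hi <;>
        simp only [Matrix.mulVec, dotProduct, Fin.sum_univ_three,
          Matrix.cons_val_zero, Matrix.cons_val_one, Matrix.head_cons,
          Matrix.cons_val_two, Matrix.tail_cons] <;>
        first
        | linear_combination h
        | ring
    · refine ⟨{0, 1}, {0, 2}, ⟨0, by decide⟩, ⟨0, by decide⟩, rfl, ?_⟩
      refine Nat.ne_of_lt (submatrix_rank_lt M {0, 1} {0, 2} ![M 1 2, 0, -(M 1 0)]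
        (by intro k hk; fin_cases k <;> simp_all) 0 (by decide) (by simpa using hz 1 2) ?_)
      intro i hi
      fin_cases hi <;>
        simp only [Matrix.mulVec, dotProduct, Fin.sum_univ_three,
          Matrix.cons_val_zero, Matrix.cons_val_one, Matrix.head_cons,
          Matrix.cons_val_two, Matrix.tail_cons] <;>
        first
        | linear_combination h
        | ring
    · refine ⟨{0, 1}, {1, 2}, ⟨0, by decide⟩, ⟨1, by decide⟩, rfl, ?_⟩
      refine Nat.ne_of_lt (submatrix_rank_lt M {0, 1} {1, 2} ![0, M 1 2, -(M 1 1)]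
        (by intro k hk; fin_cases k <;> simp_all) 1 (by decide) (by simpa using hz 1 2) ?_)
      intro i hi
      fin_cases hi <;>
        simp only [Matrix.mulVec, dotProduct, Fin.sum_univ_three,
          Matrix.cons_val_zero, Matrix.cons_val_one, Matrix.head_cons,
          Matrix.cons_val_two, Matrix.tail_cons] <;>
        first
        | linear_combination h
        | ring
end

section
/- Let Σ be an abstract simplicial complex. The barycentric subdivision Sd(Σ), defined as the iterated star subdivision of Σ first at all top-dimensional simplices, then at all simplices of the next dimension down, and so on through all 1-simplices, is isomorphic as a simplicial complex to the order complex Fl(Σ), whose vertices are the simplices of Σ and whose i-simplices are the flags (chains under inclusion) of length i+1 of simplices of Σ. -/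
/-- The faces of the star subdivision of a simplicial complex (given by its
set of faces `F`) at a simplex `σ`, with fresh vertex `e`. -/
def starFaces {V : Type*} [DecidableEq V] (F : Set (Finset V)) (σ : Finset V)
    (e : V) : Set (Finset V) :=
  {τ ∈ F | ¬ σ ⊆ τ} ∪
    {s | ∃ τ ∈ F, ∃ J : Finset V, J.Nonempty ∧ J ⊆ σ ∧ σ ⊆ τ ∧
      s = (τ \ J) ∪ {e}}

/-- The faces of the iterated star subdivision of a simplicial complex `K` on
vertex set `V`, subdividing in turn at each simplex `σ` in the list `L`, with
fresh vertex `e_σ = Sum.inr σ`.  The ambient vertex type is `V ⊕ Finset V`,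
with the original vertices embedded via `Sum.inl`. -/
def iteratedStarFaces {V : Type*} [DecidableEq V] (K : Set (Finset V))
    (L : List (Finset V)) : Set (Finset (V ⊕ Finset V)) :=
  L.foldl (fun F σ => starFaces F (σ.image Sum.inl) (Sum.inr σ))
    ((fun s : Finset V => s.image Sum.inl) '' K)

set_option linter.unusedSectionVars false

section Aux
variable {V : Type*} [DecidableEq V]

/-- Invariant describing the faces after subdividing at the simplices in `S`. -/
def Good (K S : Set (Finset V)) (s : Finset (V ⊕ Finset V)) : Prop :=
  s.Nonempty ∧ (∀ ρ ∈ s.toRight, ρ ∈ S) ∧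
  IsChain (· ⊆ ·) (↑s.toRight : Set (Finset V)) ∧
  (s.toLeft.Nonempty → s.toLeft ∈ K) ∧
  (∀ ρ ∈ S, ¬ ρ ⊆ s.toLeft) ∧
  (∀ ρ ∈ s.toRight, s.toLeft ⊂ ρ)

lemma toLeft_image_inl (σ : Finset V) :
    (σ.image (Sum.inl : V → V ⊕ Finset V)).toLeft = σ := by ext x; simp

lemma toRight_image_inl (σ : Finset V) :
    (σ.image (Sum.inl : V → V ⊕ Finset V)).toRight = ∅ := by ext x; simp

lemma toLeft_singleton_inr (σ : Finset V) :
    ({Sum.inr σ} : Finset (V ⊕ Finset V)).toLeft = ∅ := by ext x; simp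

lemma toRight_singleton_inr (σ : Finset V) :
    ({Sum.inr σ} : Finset (V ⊕ Finset V)).toRight = {σ} := by ext x; simp

lemma image_inl_subset_iff {σ : Finset V} {s : Finset (V ⊕ Finset V)} :
    σ.image Sum.inl ⊆ s ↔ σ ⊆ s.toLeft := by
  constructor
  · intro h v hv
    simpa using h (Finset.mem_image_of_mem _ hv)
  · intro h x hx
    obtain ⟨v, hv, rfl⟩ := Finset.mem_image.1 hx
    simpa using h hv

lemma eq_of_parts {s t : Finset (V ⊕ Finset V)} (h1 : s.toLeft = t.toLeft)
    (h2 : s.toRight = t.toRight) : s = t := by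
  ext (x | x)
  · rw [← Finset.mem_toLeft, ← Finset.mem_toLeft, h1]
  · rw [← Finset.mem_toRight, ← Finset.mem_toRight, h2]

lemma step_eq (K : Set (Finset V))
    (hdown : ∀ s ∈ K, ∀ t ⊆ s, t.Nonempty → t ∈ K)
    (S : Set (Finset V)) (σ : Finset V) (hσK : σ ∈ K) (hσne : σ.Nonempty)
    (H1 : ∀ ρ ∈ K, σ ⊂ ρ → ρ ∈ S)
    (H2 : ∀ ρ ∈ S, ¬ ρ ⊆ σ) :
    starFaces {s | Good K S s} (σ.image Sum.inl) (Sum.inr σ)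
      = {s | Good K (insert σ S) s} := by
  ext s
  constructor
  · rintro (⟨⟨hne, hright, hchain, hK, hnosub, hlt⟩, hnotsub⟩ |
      ⟨τ, ⟨hτne, hτright, hτchain, hτK, hτnosub, hτlt⟩, J, hJne, hJσ, hστ, rfl⟩)
    · -- untouched face
      rw [image_inl_subset_iff] at hnotsub
      exact ⟨hne, fun ρ hρ => Set.mem_insert_iff.2 (Or.inr (hright ρ hρ)), hchain, hK,
        fun ρ hρ => by
          rcases Set.mem_insert_iff.1 hρ with rfl | hρ
          · exact hnotsub
          · exact hnosub ρ hρ, hlt⟩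
    · -- new face
      rw [image_inl_subset_iff] at hστ
      -- τ.toLeft = σ
      have hτL : τ.toLeft = σ := by
        by_contra hne'
        have hss : σ ⊂ τ.toLeft := lt_of_le_of_ne hστ (Ne.symm hne')
        have hKτ : τ.toLeft ∈ K := hτK (hσne.mono hστ)
        exact hτnosub _ (H1 _ hKτ hss) subset_rfl
      -- decompose J
      set J₀ := J.toLeft with hJ₀
      have hJ₀σ : J₀ ⊆ σ := by
        intro v hv
        have := hJσ (Finset.mem_toLeft.1 hv)
        simpa [toLeft_image_inl] using Finset.mem_toLeft.1
          (Finset.toLeft_subset_toLeft hJσ hv)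
      have hJ₀ne : J₀.Nonempty := by
        obtain ⟨x, hx⟩ := hJne
        have hx' := hJσ hx
        obtain ⟨v, hv, rfl⟩ := Finset.mem_image.1 hx'
        exact ⟨v, Finset.mem_toLeft.2 hx⟩
      have hsL : ((τ \ J) ∪ {Sum.inr σ}).toLeft = σ \ J₀ := by
        rw [Finset.toLeft_union, Finset.toLeft_sdiff, toLeft_singleton_inr, hτL,
          Finset.union_empty]
      have hJR : J.toRight = ∅ := by
        ext ρ
        simp only [Finset.mem_toRight, Finset.notMem_empty, iff_false]
        intro hρ
        have := hJσ hρ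
        simp at this
      have hsR : ((τ \ J) ∪ {Sum.inr σ}).toRight = insert σ τ.toRight := by
        rw [Finset.toRight_union, Finset.toRight_sdiff, toRight_singleton_inr, hJR,
          Finset.sdiff_empty, Finset.union_comm]
        ext; simp
      have hsub' : σ \ J₀ ⊂ σ := by
        obtain ⟨v, hv⟩ := hJ₀ne
        exact Finset.ssubset_iff_of_subset Finset.sdiff_subset |>.2
          ⟨v, hJ₀σ hv, by simp [hv]⟩
      refine ⟨⟨Sum.inr σ, by simp⟩, ?_, ?_, ?_, ?_, ?_⟩
      · intro ρ hρ
        rw [hsR] at hρ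
        rcases Finset.mem_insert.1 hρ with rfl | hρ
        · exact Set.mem_insert _ _
        · exact Set.mem_insert_iff.2 (Or.inr (hτright ρ hρ))
      · rw [hsR]
        push_cast
        refine (hτchain.insert ?_)
        intro ρ hρ _
        exact Or.inl (le_of_lt (hτL ▸ hτlt ρ (by exact_mod_cast hρ)))
      · rw [hsL]
        intro hne'
        exact hdown σ hσK _ Finset.sdiff_subset hne'
      · rw [hsL]
        intro ρ hρ hsub
        rcases Set.mem_insert_iff.1 hρ with rfl | hρ
        · obtain ⟨v, hv⟩ := hJ₀ne
          have hv' := hsub (hJ₀σ hv)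
          simp [hv] at hv'
        · exact H2 ρ hρ (hsub.trans Finset.sdiff_subset)
      · rw [hsL, hsR]
        intro ρ hρ
        rcases Finset.mem_insert.1 hρ with rfl | hρ
        · exact hsub'
        · exact hsub'.trans (hτL ▸ hτlt ρ hρ)
  · rintro ⟨hne, hright, hchain, hK, hnosub, hlt⟩
    by_cases hσs : Sum.inr σ ∈ s
    · -- s is a new face
      right
      have hσR : σ ∈ s.toRight := Finset.mem_toRight.2 hσs
      have hLσ : s.toLeft ⊂ σ := hlt σ hσR
      refine ⟨σ.image Sum.inl ∪ s.erase (Sum.inr σ),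
        ?_, (σ \ s.toLeft).image Sum.inl, ?_, ?_, ?_, ?_⟩
      · -- τ is Good S
        have hτL : (σ.image Sum.inl ∪ s.erase (Sum.inr σ)).toLeft = σ := by
          rw [Finset.toLeft_union, toLeft_image_inl, Finset.erase_eq,
            Finset.toLeft_sdiff, toLeft_singleton_inr, Finset.sdiff_empty,
            Finset.union_eq_left.2 hLσ.subset]
        have hτR : (σ.image Sum.inl ∪ s.erase (Sum.inr σ)).toRight
            = s.toRight.erase σ := by
          rw [Finset.toRight_union, toRight_image_inl, Finset.erase_eq, Finset.erase_eq,
            Finset.toRight_sdiff, toRight_singleton_inr, Finset.empty_union]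
        have hmemS : ∀ ρ ∈ s.toRight.erase σ, ρ ∈ S := by
          intro ρ hρ
          obtain ⟨hρne, hρs⟩ := Finset.mem_erase.1 hρ
          rcases Set.mem_insert_iff.1 (hright ρ hρs) with rfl | h
          · exact absurd rfl hρne
          · exact h
        refine ⟨⟨Sum.inl hσne.choose, by
            simp only [Finset.mem_union]
            exact Or.inl (Finset.mem_image_of_mem _ hσne.choose_spec)⟩, ?_, ?_, ?_, ?_, ?_⟩
        · rw [hτR]; exact hmemS
        · rw [hτR]
          exact hchain.mono (by exact_mod_cast Finset.erase_subset _ _)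
        · rw [hτL]; exact fun _ => hσK
        · rw [hτL]; exact H2
        · rw [hτL, hτR]
          intro ρ hρ
          obtain ⟨hρne, hρs⟩ := Finset.mem_erase.1 hρ
          rcases hchain (by exact_mod_cast hσR) (by exact_mod_cast hρs) (fun h => hρne h.symm)
            with h | h
          · exact lt_of_le_of_ne h (fun h' => hρne h'.symm)
          · exact absurd h (H2 ρ (hmemS ρ hρ))
      · exact (Finset.image_nonempty).2 (Finset.sdiff_nonempty.2 (fun h => hLσ.ne
          (Finset.Subset.antisymm hLσ.subset h)))
      · exact Finset.image_subset_image Finset.sdiff_subset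
      · exact Finset.subset_union_left
      · -- the set equality
        apply eq_of_parts
        · rw [Finset.toLeft_union, Finset.toLeft_sdiff, Finset.toLeft_union,
            toLeft_image_inl, toLeft_image_inl, toLeft_singleton_inr, Finset.union_empty,
            Finset.erase_eq, Finset.toLeft_sdiff, toLeft_singleton_inr, Finset.sdiff_empty,
            Finset.union_eq_left.2 hLσ.subset, Finset.sdiff_sdiff_self_left]
          exact (Finset.inter_eq_right.2 hLσ.subset).symm
        · rw [Finset.toRight_union, Finset.toRight_sdiff, Finset.toRight_union,
            toRight_image_inl, toRight_singleton_inr, Finset.empty_union, Finset.erase_eq,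
            Finset.toRight_sdiff, toRight_singleton_inr, toRight_image_inl,
            Finset.sdiff_empty]
          ext ρ
          by_cases hρ : ρ = σ <;> simp [hρ, hσR]
    · -- s is an untouched face
      left
      have hσR : σ ∉ s.toRight := fun h => hσs (Finset.mem_toRight.1 h)
      refine ⟨⟨hne, ?_, hchain, hK, ?_, hlt⟩, ?_⟩
      · intro ρ hρ
        rcases Set.mem_insert_iff.1 (hright ρ hρ) with rfl | h
        · exact absurd hρ hσR
        · exact h
      · exact fun ρ hρ => hnosub ρ (Set.mem_insert_iff.2 (Or.inr hρ))
      · rw [image_inl_subset_iff]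
        exact hnosub σ (Set.mem_insert _ _)

lemma toLeft_image_inr (C : Finset (Finset V)) :
    (C.image (Sum.inr : Finset V → V ⊕ Finset V)).toLeft = ∅ := by ext x; simp

lemma toRight_image_inr (C : Finset (Finset V)) :
    (C.image (Sum.inr : Finset V → V ⊕ Finset V)).toRight = C := by ext x; simp

lemma base_eq (K : Set (Finset V)) (hne : ∀ s ∈ K, s.Nonempty) :
    ((fun s : Finset V => s.image Sum.inl) '' K)
      = {s : Finset (V ⊕ Finset V) | Good K (∅ : Set (Finset V)) s} := by
  ext s
  constructor
  · rintro ⟨τ, hτ, rfl⟩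
    refine ⟨(hne τ hτ).image _, ?_, ?_, ?_, ?_, ?_⟩ <;>
      simp [toLeft_image_inl, toRight_image_inl, hτ]
  · rintro ⟨hne', hright, -, hK, -, -⟩
    have hR : s.toRight = ∅ :=
      Finset.eq_empty_of_forall_notMem (fun ρ hρ => (hright ρ hρ).elim)
    have hL : s.toLeft.Nonempty := by
      obtain ⟨x, hx⟩ := hne'
      rcases x with v | ρ
      · exact ⟨v, Finset.mem_toLeft.2 hx⟩
      · exact absurd (Finset.mem_toRight.2 hx) (by simp [hR])
    exact ⟨s.toLeft, hK hL, (eq_of_parts (by rw [toLeft_image_inl])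
      (by rw [toRight_image_inl, hR])).symm⟩

lemma fold_eq (K : Set (Finset V))
    (hdown : ∀ s ∈ K, ∀ t ⊆ s, t.Nonempty → t ∈ K)
    (L : List (Finset V)) :
    ∀ S : Set (Finset V),
    (∀ σ ∈ L, σ ∈ K ∧ 2 ≤ σ.card) →
    (∀ ρ ∈ S, ∀ σ' ∈ L, ¬ ρ ⊆ σ') →
    (∀ ρ ∈ K, 2 ≤ ρ.card → ρ ∈ S ∨ ρ ∈ L) →
    List.Pairwise (fun σ τ => τ.card ≤ σ.card) L → L.Nodup →
    L.foldl (fun F σ => starFaces F (σ.image Sum.inl) (Sum.inr σ)) {s | Good K S s}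
      = {s | Good K (S ∪ {σ | σ ∈ L}) s} := by
  induction L with
  | nil =>
    intro S _ _ _ _ _
    have : S ∪ {σ : Finset V | σ ∈ ([] : List (Finset V))} = S := by
      ext; simp
    rw [List.foldl_nil, this]
  | cons σ t ih =>
    intro S h3 h4 h2 hs hn
    have hσK : σ ∈ K := (h3 σ List.mem_cons_self).1
    have hσc : 2 ≤ σ.card := (h3 σ List.mem_cons_self).2
    have hσne : σ.Nonempty := Finset.card_pos.1 (by omega)
    have hsc := List.pairwise_cons.1 hs
    have hnc := List.nodup_cons.1 hn
    have H1 : ∀ ρ ∈ K, σ ⊂ ρ → ρ ∈ S := by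
      intro ρ hρK hss
      have hcard : σ.card < ρ.card := Finset.card_lt_card hss
      rcases h2 ρ hρK (by omega) with h | h
      · exact h
      · rcases List.mem_cons.1 h with rfl | h
        · exact absurd hss (ssubset_irrefl _)
        · exact absurd (hsc.1 ρ h) (by omega)
    have H2 : ∀ ρ ∈ S, ¬ ρ ⊆ σ := fun ρ hρ => h4 ρ hρ σ List.mem_cons_self
    rw [List.foldl_cons, step_eq K hdown S σ hσK hσne H1 H2,
      ih (insert σ S) (fun σ' hσ' => h3 σ' (List.mem_cons_of_mem _ hσ'))
        (by
          intro ρ hρ σ' hσ' hsub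
          rcases Set.mem_insert_iff.1 hρ with rfl | hρ
          · have : ρ = σ' := Finset.eq_of_subset_of_card_le hsub (hsc.1 σ' hσ')
            exact hnc.1 (this ▸ hσ')
          · exact h4 ρ hρ σ' (List.mem_cons_of_mem _ hσ') hsub)
        (by
          intro ρ hρK hρc
          rcases h2 ρ hρK hρc with h | h
          · exact Or.inl (Set.mem_insert_iff.2 (Or.inr h))
          · rcases List.mem_cons.1 h with rfl | h
            · exact Or.inl (Set.mem_insert _ _)
            · exact Or.inr h)
        hsc.2 hnc.2]
    have hSeq : insert σ S ∪ {σ' : Finset V | σ' ∈ t}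
        = S ∪ {σ' : Finset V | σ' ∈ σ :: t} := by
      ext ρ
      simp only [Set.mem_union, Set.mem_insert_iff, Set.mem_setOf_eq, List.mem_cons]
      tauto
    rw [hSeq]

lemma f_eq (s : Finset (V ⊕ Finset V)) :
    s.image (Sum.elim (fun v => ({v} : Finset V)) id)
      = s.toLeft.image (fun v => ({v} : Finset V)) ∪ s.toRight := by
  ext ρ
  simp only [Finset.mem_image, Finset.mem_union, Finset.mem_toLeft, Finset.mem_toRight,
    Sum.exists, Sum.elim_inl, Sum.elim_inr, id_eq]
  constructor
  · rintro (⟨v, hv, rfl⟩ | ⟨c, hc, rfl⟩)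
    · exact Or.inl ⟨v, hv, rfl⟩
    · exact Or.inr hc
  · rintro (⟨v, hv, rfl⟩ | h)
    · exact Or.inl ⟨v, hv, rfl⟩
    · exact Or.inr ⟨ρ, h, rfl⟩

lemma card_toLeft_le_one {K : Set (Finset V)} {s : Finset (V ⊕ Finset V)}
    (h : Good K {ρ : Finset V | ρ ∈ K ∧ 2 ≤ ρ.card} s) : s.toLeft.card ≤ 1 := by
  obtain ⟨-, -, -, hK, hnosub, -⟩ := h
  by_contra hc
  have h2 : 2 ≤ s.toLeft.card := by omega
  have hKL : s.toLeft ∈ K := hK (Finset.card_pos.1 (by omega))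
  exact hnosub s.toLeft ⟨hKL, h2⟩ subset_rfl

end Aux


/-- The barycentric subdivision `Sd(K)` of a finite simplicial complex `K`,
defined as the iterated star subdivision of `K` first at all simplices of top
dimension, then at all simplices of the next dimension down, and so on through
all `1`-simplices, is isomorphic to the order complex `Fl(K)`, whose vertices
are the simplices of `K` and whose `i`-simplices are the flags of length
`i + 1` of simplices of `K`.  The isomorphism is induced by the vertex map
sending an original vertex `v` to the `0`-simplex `{v}` and the fresh vertex
`e_σ` to `σ`; it carries the faces of `Sd(K)` bijectively to the faces of
`Fl(K)`, i.e., to the nonempty chains of simplices of `K`. -/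
theorem barycentric_iso_orderComplex {V : Type*} [DecidableEq V]
    (K : Set (Finset V)) (hne : ∀ s ∈ K, s.Nonempty)
    (hdown : ∀ s ∈ K, ∀ t ⊆ s, t.Nonempty → t ∈ K)
    (L : List (Finset V)) (hnodup : L.Nodup)
    (hmem : ∀ σ : Finset V, σ ∈ L ↔ σ ∈ K ∧ 2 ≤ σ.card)
    (hsort : L.Pairwise fun σ τ => τ.card ≤ σ.card) :
    Set.BijOn
      (fun s : Finset (V ⊕ Finset V) =>
        s.image (Sum.elim (fun v => ({v} : Finset V)) id))
      (iteratedStarFaces K L)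
      {C : Finset (Finset V) | C.Nonempty ∧ (C : Set (Finset V)) ⊆ K ∧
        IsChain (· ⊆ ·) (C : Set (Finset V))} := by
  classical
  set Sf : Set (Finset V) := {ρ : Finset V | ρ ∈ K ∧ 2 ≤ ρ.card} with hSf
  have hchar : iteratedStarFaces K L = {s | Good K Sf s} := by
    unfold iteratedStarFaces
    rw [base_eq K hne, fold_eq K hdown L ∅ (fun σ hσ => (hmem σ).1 hσ)
      (fun ρ hρ => absurd hρ (Set.notMem_empty ρ))
      (fun ρ hρK hρc => Or.inr ((hmem ρ).2 ⟨hρK, hρc⟩)) hsort hnodup]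
    have h0 : (∅ : Set (Finset V)) ∪ {σ : Finset V | σ ∈ L} = Sf := by
      ext ρ
      simp [hmem ρ, hSf]
    rw [h0]
  rw [hchar]
  refine ⟨?_, ?_, ?_⟩
  · -- MapsTo
    rintro s ⟨hne', hright, hchain, hK, hnosub, hlt⟩
    have hcard : s.toLeft.card ≤ 1 :=
      card_toLeft_le_one ⟨hne', hright, hchain, hK, hnosub, hlt⟩
    refine ⟨hne'.image _, ?_, ?_⟩
    · intro ρ hρ
      dsimp only at hρ
      rw [Finset.mem_coe, f_eq, Finset.mem_union] at hρ
      rcases hρ with hρ | hρ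
      · obtain ⟨v, hv, rfl⟩ := Finset.mem_image.1 hρ
        exact hdown _ (hK ⟨v, hv⟩) {v} (Finset.singleton_subset_iff.2 hv)
          (Finset.singleton_nonempty v)
      · exact (hright ρ hρ).1
    · intro ρ₁ h₁ ρ₂ h₂ hne12
      dsimp only at h₁ h₂
      rw [Finset.mem_coe, f_eq, Finset.mem_union] at h₁ h₂
      rcases h₁ with h₁ | h₁ <;> rcases h₂ with h₂ | h₂
      · obtain ⟨v, hv, rfl⟩ := Finset.mem_image.1 h₁
        obtain ⟨w, hw, rfl⟩ := Finset.mem_image.1 h₂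
        exact absurd (by rw [Finset.card_le_one.1 hcard v hv w hw]) hne12
      · obtain ⟨v, hv, rfl⟩ := Finset.mem_image.1 h₁
        exact Or.inl ((Finset.singleton_subset_iff.2 hv).trans (hlt ρ₂ h₂).subset)
      · obtain ⟨v, hv, rfl⟩ := Finset.mem_image.1 h₂
        exact Or.inr ((Finset.singleton_subset_iff.2 hv).trans (hlt ρ₁ h₁).subset)
      · exact hchain h₁ h₂ hne12
  · -- InjOn
    have key : ∀ s t : Finset (V ⊕ Finset V), Good K Sf s → Good K Sf t →
        s.image (Sum.elim (fun v => ({v} : Finset V)) id)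
          = t.image (Sum.elim (fun v => ({v} : Finset V)) id) → s ⊆ t := by
      intro s t hs ht heq x hx
      rcases x with v | ρ
      · have hmem' : ({v} : Finset V) ∈
            t.image (Sum.elim (fun v => ({v} : Finset V)) id) := by
          rw [← heq]
          exact Finset.mem_image.2 ⟨Sum.inl v, hx, rfl⟩
        rw [f_eq, Finset.mem_union] at hmem'
        rcases hmem' with h | h
        · obtain ⟨w, hw, hsw⟩ := Finset.mem_image.1 h
          have : w = v := Finset.singleton_inj.1 hsw
          exact Finset.mem_toLeft.1 (this ▸ hw)
        · have := (ht.2.1 _ h).2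
          simp at this
      · have hmem' : ρ ∈ t.image (Sum.elim (fun v => ({v} : Finset V)) id) := by
          rw [← heq]
          exact Finset.mem_image.2 ⟨Sum.inr ρ, hx, rfl⟩
        rw [f_eq, Finset.mem_union] at hmem'
        rcases hmem' with h | h
        · obtain ⟨w, hw, hsw⟩ := Finset.mem_image.1 h
          have h2 := (hs.2.1 ρ (Finset.mem_toRight.2 hx)).2
          rw [← hsw] at h2
          simp at h2
        · exact Finset.mem_toRight.1 h
    intro s1 h1 s2 h2 heq
    exact Finset.Subset.antisymm (key s1 s2 h1 h2 heq) (key s2 s1 h2 h1 heq.symm)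
  · -- SurjOn
    rintro D ⟨hDne, hDK, hDch⟩
    set T := D.filter (fun ρ => ρ.card ≤ 1) with hT
    set C := D.filter (fun ρ => 2 ≤ ρ.card) with hC
    set τ := T.biUnion id with hτdef
    set s := τ.image Sum.inl ∪ C.image Sum.inr with hsdef
    have hDcard : ∀ ρ ∈ D, 1 ≤ ρ.card := fun ρ h =>
      Finset.card_pos.2 (hne ρ (hDK h))
    have hTv : ∀ ρ ∈ T, ∃ v, ρ = {v} := by
      intro ρ hρ
      obtain ⟨hρD, hρc⟩ := Finset.mem_filter.1 hρ
      exact Finset.card_eq_one.1 (le_antisymm hρc (hDcard ρ hρD))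
    have hτsing : ∀ v ∈ τ, ({v} : Finset V) ∈ T := by
      intro v hv
      obtain ⟨ρ, hρT, hvρ⟩ := Finset.mem_biUnion.1 hv
      obtain ⟨w, rfl⟩ := hTv ρ hρT
      obtain rfl : w = v := (Finset.mem_singleton.1 hvρ).symm
      exact hρT
    have hvτ : ∀ v : V, ({v} : Finset V) ∈ T → v ∈ τ := by
      intro v h
      exact Finset.mem_biUnion.2 ⟨{v}, h, Finset.mem_singleton_self v⟩
    have hcardτ : τ.card ≤ 1 := by
      rw [Finset.card_le_one]
      intro u hu v hv
      have h1 := Finset.mem_of_mem_filter _ (hτsing u hu)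
      have h2 := Finset.mem_of_mem_filter _ (hτsing v hv)
      by_cases h : ({u} : Finset V) = {v}
      · exact Finset.singleton_inj.1 h
      · rcases hDch (Finset.mem_coe.2 h1) (Finset.mem_coe.2 h2) h with h' | h'
        · exact Finset.mem_singleton.1 (h' (Finset.mem_singleton_self u))
        · exact (Finset.mem_singleton.1 (h' (Finset.mem_singleton_self v))).symm
    have hsL : s.toLeft = τ := by
      rw [hsdef, Finset.toLeft_union, toLeft_image_inl, toLeft_image_inr,
        Finset.union_empty]
    have hsR : s.toRight = C := by
      rw [hsdef, Finset.toRight_union, toRight_image_inl, toRight_image_inr,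
        Finset.empty_union]
    have hCD : ∀ ρ ∈ C, ρ ∈ D := fun ρ h => Finset.mem_of_mem_filter _ h
    have hC2 : ∀ ρ ∈ C, 2 ≤ ρ.card := fun ρ h => (Finset.mem_filter.1 h).2
    have hτρ : ∀ ρ ∈ C, τ ⊂ ρ := by
      intro ρ hρ
      have h2 := hC2 ρ hρ
      rw [Finset.ssubset_iff_subset_ne]
      constructor
      · intro v hv
        have hvD := Finset.mem_of_mem_filter _ (hτsing v hv)
        by_cases h : ({v} : Finset V) = ρ
        · exact absurd (h ▸ h2) (by simp)
        · rcases hDch (Finset.mem_coe.2 hvD) (Finset.mem_coe.2 (hCD ρ hρ)) h with h' | h'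
          · exact h' (Finset.mem_singleton_self v)
          · have := (Finset.card_le_card h').trans (Finset.card_singleton v).le
            omega
      · intro h
        rw [h] at hcardτ
        omega
    have hsGood : Good K Sf s := by
      refine ⟨?_, ?_, ?_, ?_, ?_, ?_⟩
      · obtain ⟨ρ, hρ⟩ := hDne
        by_cases h2c : 2 ≤ ρ.card
        · exact ⟨Sum.inr ρ, Finset.mem_union_right _
            (Finset.mem_image_of_mem _ (Finset.mem_filter.2 ⟨hρ, h2c⟩))⟩
        · have hρT : ρ ∈ T := Finset.mem_filter.2 ⟨hρ, by omega⟩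
          obtain ⟨v, rfl⟩ := hTv ρ hρT
          exact ⟨Sum.inl v, Finset.mem_union_left _
            (Finset.mem_image_of_mem _ (hvτ v hρT))⟩
      · intro ρ hρ
        rw [hsR] at hρ
        exact ⟨hDK (Finset.mem_coe.2 (hCD ρ hρ)), hC2 ρ hρ⟩
      · rw [hsR]
        exact hDch.mono (Finset.coe_subset.2 (Finset.filter_subset _ _))
      · rw [hsL]
        rintro ⟨v, hv⟩
        have hvD := Finset.mem_of_mem_filter _ (hτsing v hv)
        have : τ = {v} := by
          rw [Finset.eq_singleton_iff_unique_mem]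
          exact ⟨hv, fun w hw => Finset.card_le_one.1 hcardτ w hw v hv⟩
        rw [this]
        exact hDK hvD
      · rw [hsL]
        intro ρ hρ hsub
        have := Finset.card_le_card hsub
        have h2 := hρ.2
        omega
      · rw [hsL, hsR]
        exact hτρ
    refine ⟨s, hsGood, ?_⟩
    show s.image (Sum.elim (fun v => ({v} : Finset V)) id) = D
    rw [f_eq, hsL, hsR]
    ext ρ
    rw [Finset.mem_union]
    constructor
    · rintro (h | h)
      · obtain ⟨v, hv, rfl⟩ := Finset.mem_image.1 h
        exact Finset.mem_of_mem_filter _ (hτsing v hv)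
      · exact hCD ρ h
    · intro hρ
      by_cases h2c : 2 ≤ ρ.card
      · exact Or.inr (Finset.mem_filter.2 ⟨hρ, h2c⟩)
      · have hρT : ρ ∈ T := Finset.mem_filter.2 ⟨hρ, by omega⟩
        obtain ⟨v, rfl⟩ := hTv ρ hρT
        exact Or.inl (Finset.mem_image.2 ⟨v, hvτ v hρT, rfl⟩)
end

section
/- Let X be a scheme (or more generally, let 'subschemes' be replaced by closed subsets of a catenary topological space with a codimension function). Suppose {W_i}_{i∈I} is a finite collection of irreducible closed subsets of X that intersects properly, and W ⊆ X is an irreducible closed subset such that for every subset J ⊆ I, W intersects each irreducible component of W_J = ⋂_{j∈J} W_j properly (codim of each component of W ∩ W_J is at least codim W + codim of that component). Then the collection {W_i}_{i∈I} ∪ {W} intersects properly. -/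
open TopologicalSpace

/-- The codimension of a subset `s` of a topological space: the infimum of the
coheights (in the poset of irreducible closed subsets) of the irreducible
closed subsets contained in `s`.  In particular `codim ∅ = ⊤`. -/
noncomputable def codim {X : Type*} [TopologicalSpace X] (s : Set X) : ℕ∞ :=
  ⨅ (Z : IrreducibleCloseds X) (_ : (Z : Set X) ⊆ s), Order.coheight Z

/-- `Z` is an irreducible component of `s`: a maximal irreducible closed
subset contained in `s`. -/
def IsComponentOf {X : Type*} [TopologicalSpace X]
    (Z : IrreducibleCloseds X) (s : Set X) : Prop :=
  (Z : Set X) ⊆ s ∧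
    ∀ Z' : IrreducibleCloseds X, (Z' : Set X) ⊆ s → (Z : Set X) ⊆ Z' → Z = Z'

/-- A finite collection of irreducible closed subsets intersects properly if
for every subset `J` of the index set, the codimension of the intersection is
at least the sum of the codimensions. -/
def IntersectsProperly {X : Type*} [TopologicalSpace X] {ι : Type*}
    (W : ι → IrreducibleCloseds X) : Prop :=
  ∀ J : Finset ι, (∑ j ∈ J, codim (W j : Set X)) ≤
    codim (⋂ j ∈ J, (W j : Set X))

theorem codim_le_coheight {X : Type*} [TopologicalSpace X] {s : Set X}
    {Z : IrreducibleCloseds X} (h : (Z : Set X) ⊆ s) :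
    codim s ≤ Order.coheight Z :=
  iInf₂_le Z h

open Set in
theorem exists_isComponentOf {X : Type*} [TopologicalSpace X] {s : Set X}
    (hs : IsClosed s) (Z : IrreducibleCloseds X) (hZ : (Z : Set X) ⊆ s) :
    ∃ Y : IrreducibleCloseds X, IsComponentOf Y s ∧ (Z : Set X) ⊆ Y := by
  obtain ⟨m, hZm, hm⟩ := zorn_subset_nonempty
      { t : Set X | IsPreirreducible t ∧ t ⊆ s }
      (fun c hc hcc _ => by
        refine ⟨⋃₀ c, ⟨fun u v hu hv ⟨y, hy, hyu⟩ ⟨x, hx, hxv⟩ => ?_, ?_⟩,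
          fun t ht => subset_sUnion_of_mem ht⟩
        · obtain ⟨p, hpc, hyp⟩ := mem_sUnion.1 hy
          obtain ⟨q, hqc, hxq⟩ := mem_sUnion.1 hx
          rcases hcc.total hpc hqc with hpq | hqp
          · obtain ⟨x, hxp, hxuv⟩ := (hc hqc).1 u v hu hv ⟨y, hpq hyp, hyu⟩ ⟨x, hxq, hxv⟩
            exact ⟨x, mem_sUnion_of_mem hxp hqc, hxuv⟩
          · obtain ⟨x, hxp, hxuv⟩ := (hc hpc).1 u v hu hv ⟨y, hyp, hyu⟩ ⟨x, hqp hxq, hxv⟩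
            exact ⟨x, mem_sUnion_of_mem hxp hpc, hxuv⟩
        · exact sUnion_subset fun t ht => (hc ht).2)
      (Z : Set X) ⟨Z.2.2, hZ⟩
  have hmc : IsClosed m := by
    rw [← closure_eq_iff_isClosed]
    exact (hm.eq_of_subset ⟨hm.prop.1.closure, closure_minimal hm.prop.2 hs⟩
      subset_closure).symm
  refine ⟨⟨m, ⟨Set.Nonempty.mono hZm Z.2.1, hm.prop.1⟩, hmc⟩, ⟨hm.prop.2, ?_⟩, hZm⟩
  intro Z' hZ's hmZ'
  have : m = (Z' : Set X) := hm.eq_of_subset ⟨Z'.2.2, hZ's⟩ hmZ'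
  exact IrreducibleCloseds.ext this

/-- Suppose `{W_i}` is a finite collection of irreducible closed subsets of
`X` intersecting properly and `W` is an irreducible closed subset such that
for every subset `J` of the index set, `W` intersects each irreducible
component `Y` of `W_J = ⋂_{j ∈ J} W_j` properly, i.e. every irreducible
component `Z` of `W ∩ Y` satisfies `codim Z ≥ codim W + codim Y`.  Then the
collection `{W_i} ∪ {W}` intersects properly. -/
theorem intersectsProperly_insert {X : Type*} [TopologicalSpace X]
    {ι : Type*} [Fintype ι] (W : ι → IrreducibleCloseds X)
    (W₀ : IrreducibleCloseds X)
    (hW : IntersectsProperly W)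
    (hW₀ : ∀ J : Finset ι, ∀ Y : IrreducibleCloseds X,
      IsComponentOf Y (⋂ j ∈ J, (W j : Set X)) →
      ∀ Z : IrreducibleCloseds X,
        IsComponentOf Z ((W₀ : Set X) ∩ (Y : Set X)) →
        codim (W₀ : Set X) + Order.coheight Y ≤ Order.coheight Z) :
    IntersectsProperly (fun o : Option ι => o.elim W₀ W) := by
  classical
  intro J
  by_cases hn : none ∈ J
  -- rewrite sum and intersection
  case neg =>
    have hJ : J = (J.eraseNone).map Function.Embedding.some := by
      rw [Finset.map_some_eraseNone, Finset.erase_eq_self.2 hn]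
    rw [hJ, Finset.sum_map]
    have hint : (⋂ o ∈ (J.eraseNone).map Function.Embedding.some,
        ((o.elim W₀ W : IrreducibleCloseds X) : Set X)) =
        ⋂ j ∈ J.eraseNone, ((W j : IrreducibleCloseds X) : Set X) := by
      ext x
      simp only [Set.mem_iInter, Finset.mem_map, Function.Embedding.some_apply]
      constructor
      · intro h j hj
        exact h (some j) ⟨j, hj, rfl⟩
      · rintro h o ⟨j, hj, rfl⟩
        exact h j hj
    rw [hint]
    exact hW J.eraseNone
  case pos =>
    set J' := J.eraseNone with hJ'
    have hsum : (∑ o ∈ J, codim ((o.elim W₀ W : IrreducibleCloseds X) : Set X)) =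
        codim (W₀ : Set X) + ∑ j ∈ J', codim (W j : Set X) := by
      rw [← Finset.add_sum_erase _ _ hn, ← Finset.map_some_eraseNone, Finset.sum_map]
      rfl
    rw [hsum]
    refine le_iInf₂ fun Z hZ => ?_
    have hZW₀ : (Z : Set X) ⊆ (W₀ : Set X) := by
      exact (Set.subset_iInter₂_iff.1 hZ none hn)
    have hZJ' : (Z : Set X) ⊆ ⋂ j ∈ J', (W j : Set X) := by
      refine Set.subset_iInter₂ fun j hj => ?_
      have : (some j : Option ι) ∈ J := Finset.mem_eraseNone.1 hj
      exact Set.subset_iInter₂_iff.1 hZ (some j) this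
    have hclosed : IsClosed (⋂ j ∈ J', (W j : Set X)) :=
      isClosed_biInter fun j _ => (W j).3
    obtain ⟨Y, hYcomp, hZY⟩ := exists_isComponentOf hclosed Z hZJ'
    have hclosed2 : IsClosed ((W₀ : Set X) ∩ (Y : Set X)) := W₀.3.inter Y.3
    obtain ⟨Z', hZ'comp, hZZ'⟩ := exists_isComponentOf hclosed2 Z
      (Set.subset_inter hZW₀ hZY)
    have h1 : codim (W₀ : Set X) + Order.coheight Y ≤ Order.coheight Z' :=
      hW₀ J' Y hYcomp Z' hZ'comp
    have h2 : Order.coheight Z' ≤ Order.coheight Z :=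
      Order.coheight_anti (show Z ≤ Z' from hZZ')
    have h3 : codim (⋂ j ∈ J', (W j : Set X)) ≤ Order.coheight Y :=
      codim_le_coheight hYcomp.1
    calc codim (W₀ : Set X) + ∑ j ∈ J', codim (W j : Set X)
        ≤ codim (W₀ : Set X) + codim (⋂ j ∈ J', (W j : Set X)) :=
          add_le_add_right (hW J') _
      _ ≤ codim (W₀ : Set X) + Order.coheight Y := add_le_add_right h3 _
      _ ≤ Order.coheight Z' := h1
      _ ≤ Order.coheight Z := h2
end

section
/- Let A be a commutative ring and a ∈ A a regular element (non-zerodivisor). Let E be a finite free A-module and F a finite free A/(a)-module, regarded as an A-module. Then the kernel of any surjective A-module map E → F is a projective A-module. -/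
open LinearMap

/-- Schanuel-type lemma: if `f : M₁ → N` and `g : M₂ → N` are surjective with
`M₁`, `M₂` projective and `ker g` projective, then `ker f` is projective. -/
theorem schanuel_aux {R : Type*} [CommRing R]
    {M₁ : Type*} [AddCommGroup M₁] [Module R M₁] [Module.Projective R M₁]
    {M₂ : Type*} [AddCommGroup M₂] [Module R M₂] [Module.Projective R M₂]
    {N : Type*} [AddCommGroup N] [Module R N]
    (f : M₁ →ₗ[R] N) (g : M₂ →ₗ[R] N)
    (hf : Function.Surjective f) (hg : Function.Surjective g)
    (hkg : Module.Projective R (LinearMap.ker g)) :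
    Module.Projective R (LinearMap.ker f) := by
  classical
  set φ : M₁ × M₂ →ₗ[R] N := f ∘ₗ LinearMap.fst R M₁ M₂ - g ∘ₗ LinearMap.snd R M₁ M₂ with hφ
  set X : Submodule R (M₁ × M₂) := LinearMap.ker φ with hX
  have memX : ∀ z : M₁ × M₂, z ∈ X ↔ f z.1 = g z.2 := by
    intro z
    simp [hX, hφ, LinearMap.mem_ker, sub_eq_zero]
  set pr₁ : X →ₗ[R] M₁ := LinearMap.fst R M₁ M₂ ∘ₗ X.subtype with hpr₁def
  set pr₂ : X →ₗ[R] M₂ := LinearMap.snd R M₁ M₂ ∘ₗ X.subtype with hpr₂def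
  have hpr₁ : Function.Surjective pr₁ := by
    intro x
    obtain ⟨y, hy⟩ := hg (f x)
    exact ⟨⟨(x, y), (memX _).2 hy.symm⟩, rfl⟩
  have hpr₂ : Function.Surjective pr₂ := by
    intro y
    obtain ⟨x, hx⟩ := hf (g y)
    exact ⟨⟨(x, y), (memX _).2 hx⟩, rfl⟩
  obtain ⟨t, ht⟩ := Module.projective_lifting_property pr₁ LinearMap.id hpr₁
  obtain ⟨s, hs⟩ := Module.projective_lifting_property pr₂ LinearMap.id hpr₂
  have ht' : ∀ x, pr₁ (t x) = x := fun x => congrArg (fun h => h x) (congrArg DFunLike.coe ht)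
  have hs' : ∀ y, pr₂ (s y) = y := fun y => congrArg (fun h => h y) (congrArg DFunLike.coe hs)
  -- ker pr₁ ≃ ker g
  let fwd : LinearMap.ker g →ₗ[R] LinearMap.ker pr₁ :=
    LinearMap.codRestrict _ (LinearMap.codRestrict X
      (LinearMap.inr R M₁ M₂ ∘ₗ (LinearMap.ker g).subtype)
      (fun c => (memX _).2 (by
        have : g (c : M₂) = 0 := c.2
        simp [this])))
      (fun c => rfl)
  let bwd : LinearMap.ker pr₁ →ₗ[R] LinearMap.ker g :=
    LinearMap.codRestrict _
      (LinearMap.snd R M₁ M₂ ∘ₗ X.subtype ∘ₗ (LinearMap.ker pr₁).subtype)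
      (fun c => by
        have h1 : f ((c : X) : M₁ × M₂).1 = g ((c : X) : M₁ × M₂).2 := (memX _).1 (c : X).2
        have h2 : ((c : X) : M₁ × M₂).1 = 0 := c.2
        show g ((c : X) : M₁ × M₂).2 = 0
        rw [← h1, h2, map_zero])
  have eK : (LinearMap.ker g) ≃ₗ[R] (LinearMap.ker pr₁) := by
    refine LinearEquiv.ofLinear fwd bwd ?_ ?_
    · apply LinearMap.ext; intro c
      apply Subtype.ext; apply Subtype.ext
      show ((0 : M₁), ((c : X) : M₁ × M₂).2) = (((c : X) : M₁ × M₂))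
      have h2 : ((c : X) : M₁ × M₂).1 = 0 := c.2
      exact Prod.ext h2.symm rfl
    · apply LinearMap.ext; intro c
      apply Subtype.ext
      rfl
  -- X ≃ ker pr₁ × M₁
  have hmem : ∀ x : X, x - t (pr₁ x) ∈ LinearMap.ker pr₁ := by
    intro x
    simp [LinearMap.mem_ker, map_sub, ht']
  let bwdX : X →ₗ[R] (LinearMap.ker pr₁) × M₁ :=
    LinearMap.prod ((LinearMap.id - t ∘ₗ pr₁).codRestrict (LinearMap.ker pr₁)
      (fun x => hmem x)) pr₁
  let fwdX : (LinearMap.ker pr₁) × M₁ →ₗ[R] X :=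
    (LinearMap.ker pr₁).subtype ∘ₗ LinearMap.fst R _ M₁ + t ∘ₗ LinearMap.snd R _ M₁
  have eX : ((LinearMap.ker pr₁) × M₁) ≃ₗ[R] X := by
    refine LinearEquiv.ofLinear fwdX bwdX ?_ ?_
    · apply LinearMap.ext; intro x
      show (x - t (pr₁ x)) + t (pr₁ x) = x
      abel
    · apply LinearMap.ext; intro kx
      obtain ⟨k, x⟩ := kx
      have hk : pr₁ (k : X) = 0 := k.2
      refine Prod.ext (Subtype.ext ?_) ?_
      · show ((k : X) + t x) - t (pr₁ ((k : X) + t x)) = (k : X)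
        rw [map_add, hk, zero_add, ht']
        abel
      · show pr₁ ((k : X) + t x) = x
        rw [map_add, hk, zero_add, ht']
  haveI : Module.Projective R (LinearMap.ker pr₁) := Module.Projective.of_equiv eK
  haveI hXproj : Module.Projective R X := Module.Projective.of_equiv eX
  -- ker f is a direct summand of X
  let i : LinearMap.ker f →ₗ[R] X :=
    LinearMap.codRestrict X (LinearMap.inl R M₁ M₂ ∘ₗ (LinearMap.ker f).subtype)
      (fun c => (memX _).2 (by
        have : f (c : M₁) = 0 := c.2
        simp [this]))
  let r : X →ₗ[R] LinearMap.ker f :=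
    LinearMap.codRestrict _
      (LinearMap.fst R M₁ M₂ ∘ₗ (X.subtype - X.subtype ∘ₗ s ∘ₗ pr₂))
      (fun x => by
        show f ((x : M₁ × M₂).1 - ((s (pr₂ x) : M₁ × M₂)).1) = 0
        have h1 : f ((x : M₁ × M₂)).1 = g ((x : M₁ × M₂)).2 := (memX _).1 x.2
        have h2 : f ((s (pr₂ x) : M₁ × M₂)).1 = g ((s (pr₂ x) : M₁ × M₂)).2 :=
          (memX _).1 (s (pr₂ x)).2
        have h3 : ((s (pr₂ x) : M₁ × M₂)).2 = (x : M₁ × M₂).2 := hs' (pr₂ x)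
        rw [map_sub, h1, h2, h3, sub_self])
  refine Module.Projective.of_split i r ?_
  apply LinearMap.ext; intro c
  apply Subtype.ext
  show ((i c : M₁ × M₂).1 - ((s (pr₂ (i c)) : M₁ × M₂)).1) = (c : M₁)
  have h0 : pr₂ (i c) = 0 := rfl
  rw [h0, map_zero]
  show ((c : M₁), (0 : M₂)).1 - ((0 : X) : M₁ × M₂).1 = (c : M₁)
  simp

/-- Let `A` be a commutative ring, `a ∈ A` a regular element, `E` a finite
free `A`-module, and `F` a finite free `A/(a)`-module regarded as an
`A`-module. Then the kernel of any surjective `A`-linear map `E → F` is a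
projective `A`-module. -/
theorem ker_surjective_projective {A : Type*} [CommRing A] (a : A)
    (ha : a ∈ nonZeroDivisors A)
    (E : Type*) [AddCommGroup E] [Module A E] [Module.Free A E]
    [Module.Finite A E]
    (F : Type*) [AddCommGroup F] [Module (A ⧸ Ideal.span {a}) F]
    [Module.Free (A ⧸ Ideal.span {a}) F] [Module.Finite (A ⧸ Ideal.span {a}) F]
    [Module A F] [IsScalarTower A (A ⧸ Ideal.span {a}) F]
    (f : E →ₗ[A] F) (hf : Function.Surjective f) :
    Module.Projective A (LinearMap.ker f) := by
  classical
  set Q := A ⧸ Ideal.span {a} with hQ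
  set mk : A →+* Q := Ideal.Quotient.mk (Ideal.span {a}) with hmk
  have hsmul : ∀ (c : A) (x : F), c • x = mk c • x := by
    intro c x
    rw [← algebraMap_smul Q c x, hmk, Ideal.Quotient.algebraMap_eq]
  let b := Module.Free.chooseBasis Q F
  set ι := Module.Free.ChooseBasisIndex Q F with hι
  set g : (ι →₀ A) →ₗ[A] F := Finsupp.linearCombination A (fun i => b i) with hg
  have key : ∀ v : ι →₀ A, g v =
      Finsupp.linearCombination Q (fun i => b i) (v.mapRange mk (map_zero mk)) := by
    intro v
    rw [hg, Finsupp.linearCombination_apply, Finsupp.linearCombination_apply,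
      Finsupp.sum_mapRange_index (by simp)]
    exact Finsupp.sum_congr fun i _ => hsmul _ _
  have hgsurj : Function.Surjective g := by
    intro x
    set σ : Q → A := fun q => if q = 0 then 0 else Function.surjInv
      Ideal.Quotient.mk_surjective q with hσ
    have hσ0 : σ 0 = 0 := by simp [hσ]
    have hσmk : ∀ q, mk (σ q) = q := by
      intro q
      by_cases h : q = 0
      · simp [hσ, h]
      · simp only [hσ, if_neg h, hmk]
        exact Function.surjInv_eq Ideal.Quotient.mk_surjective q
    refine ⟨(b.repr x).mapRange σ hσ0, ?_⟩
    rw [key]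
    have : ((b.repr x).mapRange σ hσ0).mapRange mk (map_zero mk) = b.repr x := by
      ext i
      simp [Finsupp.mapRange_apply, hσmk]
    rw [this]
    exact b.linearCombination_repr x
  have hmka : mk a = 0 := by
    rw [hmk, Ideal.Quotient.eq_zero_iff_mem]
    exact Ideal.mem_span_singleton_self a
  set μ : (ι →₀ A) →ₗ[A] (ι →₀ A) := a • LinearMap.id with hμ
  have hμapp : ∀ (w : ι →₀ A) (i : ι), (μ w) i = a * w i := by
    intro w i
    simp [hμ, smul_eq_mul]
  have hkerg : LinearMap.ker g = LinearMap.range μ := by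
    ext v
    constructor
    · intro hv
      have hv0 : g v = 0 := hv
      rw [key] at hv0
      have h1 : v.mapRange mk (map_zero mk) = b.repr 0 := by
        rw [← hv0, b.repr_linearCombination]
      rw [map_zero] at h1
      have hdvd : ∀ i, a ∣ v i := by
        intro i
        have : mk (v i) = 0 := by
          have := congrArg (fun w => w i) h1
          simpa [Finsupp.mapRange_apply] using this
        rw [hmk, Ideal.Quotient.eq_zero_iff_mem, Ideal.mem_span_singleton] at this
        exact this
      set u : ι → A := fun i => (hdvd i).choose with hu
      have hua : ∀ i, a * u i = v i := fun i => ((hdvd i).choose_spec).symm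
      have husupp : ∀ i : ι, u i ≠ 0 → i ∈ v.support := by
        intro i hi
        simp only [Finsupp.mem_support_iff]
        intro hvi
        apply hi
        have : u i * a = 0 := by rw [mul_comm, hua, hvi]
        exact (mem_nonZeroDivisors_iff.1 ha).2 _ this
      refine ⟨Finsupp.onFinset v.support u husupp, ?_⟩
      ext i
      rw [hμapp]
      simp only [Finsupp.onFinset_apply]
      exact hua i
    · rintro ⟨w, rfl⟩
      have : g (μ w) = a • g w := by
        rw [hμ]
        simp
      rw [LinearMap.mem_ker, this, hsmul, hmka, zero_smul]
  have hμinj : Function.Injective μ := by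
    intro w w' h
    ext i
    have h1 : a * w i = a * w' i := by
      have := congrArg (fun v => v i) h
      simpa [hμapp] using this
    have h2 : (w i - w' i) * a = 0 := by
      rw [sub_mul, mul_comm (w i) a, mul_comm (w' i) a, h1, sub_self]
    exact sub_eq_zero.mp ((mem_nonZeroDivisors_iff.1 ha).2 _ h2)
  have hμmem : ∀ w : ι →₀ A, μ w ∈ LinearMap.ker g := by
    intro w
    rw [hkerg]
    exact LinearMap.mem_range_self μ w
  have eP : (ι →₀ A) ≃ₗ[A] LinearMap.ker g := by
    refine LinearEquiv.ofBijective (μ.codRestrict (LinearMap.ker g) hμmem) ⟨?_, ?_⟩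
    · intro w w' hww
      exact hμinj (congrArg Subtype.val hww)
    · rintro ⟨v, hv⟩
      rw [hkerg] at hv
      obtain ⟨w, hw⟩ := hv
      exact ⟨w, Subtype.ext hw⟩
  haveI : Module.Projective A (LinearMap.ker g) := Module.Projective.of_equiv eP
  exact schanuel_aux f g hf hgsurj this
end
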